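/- arXiv:1801.05992 — 4 statements merged into one kernel-verified Lean document; each statement's English description precedes it below -/
import Mathlib

section
/- For a finite point set P ⊆ ℝ², the family C_P := {C ⊆ P : conv(C) ∩ P = C} satisfies the extension axiom of convex geometries: for every C ∈ C_P with C ≠ P there exists x ∈ P \ C such that C ∪ {x} ∈ C_P. -/
/-- Exchange lemma: if `y ∈ conv(C ∪ {x})` but `y ∉ conv C`, `x ∉ conv C`,
and `y ≠ x`, then `x ∉ conv(C ∪ {y})`. -/
lemma convexHull_exchange (C : Set (ℝ × ℝ)) (x y : ℝ × ℝ)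
    (hx : x ∉ convexHull ℝ C) (hy : y ∉ convexHull ℝ C) (hyx : y ≠ x)
    (hmem : y ∈ convexHull ℝ (C ∪ {x})) : x ∉ convexHull ℝ (C ∪ {y}) := by
  rcases C.eq_empty_or_nonempty with rfl | hCne
  · rw [Set.empty_union, convexHull_singleton, Set.mem_singleton_iff] at hmem
    exact absurd hmem hyx
  intro hxmem
  rw [Set.union_singleton, convexHull_insert hCne] at hmem hxmem
  rw [mem_convexJoin] at hmem hxmem
  obtain ⟨x', hx', z, hz, hseg1⟩ := hmem
  obtain ⟨y', hy', w, hw, hseg2⟩ := hxmem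
  rw [Set.mem_singleton_iff] at hx' hy'
  rcases hx'.symm with rfl
  rcases hy'.symm with rfl
  obtain ⟨a, b, ha, hb, hab, hyeq⟩ := hseg1
  obtain ⟨c, d, hc, hd, hcd, hxeq⟩ := hseg2
  have hc1 : c ≤ 1 := by linarith
  have ha1 : a ≤ 1 := by linarith
  by_cases hca : c * a = 1
  · have hc' : c = 1 := by nlinarith
    have ha' : a = 1 := by nlinarith
    have hd' : d = 0 := by linarith
    rw [hc', hd', one_smul, zero_smul, add_zero] at hxeq
    exact hyx hxeq
  · have hca' : c * a < 1 := lt_of_le_of_ne (by nlinarith) hca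
    have hpos : (0:ℝ) < 1 - c * a := by linarith
    have h1 : (1 - c * a) • x = (c * b) • z + d • w := by
      have : x = c • (a • x + b • z) + d • w := by rw [hyeq]; exact hxeq.symm
      rw [smul_add, smul_smul, smul_smul] at this
      linear_combination (norm := module) this
    have h2 : x = ((c * b) / (1 - c * a)) • z + (d / (1 - c * a)) • w := by
      have := congrArg (fun v => (1 - c * a)⁻¹ • v) h1
      simp only [smul_add, smul_smul, inv_mul_cancel₀ hpos.ne', one_smul] at this
      rw [this]
      congr 1 <;> rw [div_eq_inv_mul]
    have hxin : x ∈ convexHull ℝ C := by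
      rw [h2]
      exact (convex_convexHull ℝ C) hz hw (by positivity) (by positivity)
        (by field_simp; nlinarith)
    exact hx hxin

/-- for a finite point set P ⊆ ℝ², the family
C_P = {C ⊆ P : conv(C) ∩ P = C} satisfies the extension axiom of convex
geometries: every proper convexly closed subset of P extends by one point of P
to a convexly closed set. -/
theorem convexGeometry_extension (P : Set (ℝ × ℝ)) (hP : P.Finite)
    (C : Set (ℝ × ℝ)) (hCP : C ⊆ P) (hC : convexHull ℝ C ∩ P = C) (hne : C ≠ P) :
    ∃ x ∈ P \ C, convexHull ℝ (C ∪ {x}) ∩ P = C ∪ {x} := by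
  have hTne : (P \ C).Nonempty := by
    rw [Set.diff_nonempty]
    intro h
    exact hne (Set.Subset.antisymm hCP h)
  obtain ⟨x, hx, hmin⟩ := Set.exists_min_image (P \ C)
    (fun x => (convexHull ℝ (C ∪ {x}) ∩ P).ncard) (hP.diff : (P \ C).Finite) hTne
  refine ⟨x, hx, ?_⟩
  apply Set.Subset.antisymm
  · intro y hy
    by_contra hyC
    have hyP : y ∈ P := hy.2
    have hynC : y ∉ C := fun h => hyC (Or.inl h)
    have hyx : y ≠ x := fun h => hyC (Or.inr h)
    have hyT : y ∈ P \ C := ⟨hyP, hynC⟩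
    have hxC : x ∉ convexHull ℝ C := fun h => hx.2 (hC ▸ ⟨h, hx.1⟩)
    have hyCh : y ∉ convexHull ℝ C := fun h => hynC (hC ▸ ⟨h, hyP⟩)
    have hxnot : x ∉ convexHull ℝ (C ∪ {y}) :=
      convexHull_exchange C x y hxC hyCh hyx hy.1
    have hsub : convexHull ℝ (C ∪ {y}) ⊆ convexHull ℝ (C ∪ {x}) := by
      apply convexHull_min _ (convex_convexHull ℝ _)
      rintro z (hz | rfl)
      · exact subset_convexHull ℝ _ (Or.inl hz)
      · exact hy.1
    have hstrict : (convexHull ℝ (C ∪ {y}) ∩ P) ⊂ (convexHull ℝ (C ∪ {x}) ∩ P) := by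
      refine ⟨Set.inter_subset_inter_left P hsub, fun hss => ?_⟩
      exact hxnot (hss ⟨subset_convexHull ℝ _ (Or.inr rfl), hx.1⟩).1
    have hlt := Set.ncard_lt_ncard hstrict (hP.inter_of_right _)
    have := hmin y hyT
    omega
  · apply Set.union_subset
    · intro z hz
      exact ⟨subset_convexHull ℝ _ (Or.inl hz), hCP hz⟩
    · intro z hz
      rw [Set.mem_singleton_iff] at hz
      subst hz
      exact ⟨subset_convexHull ℝ _ (Or.inr rfl), hx.1⟩
end

section
/- The order type of a planar point set determines its induced convex geometry: if two finite point sets P and Q in general position admit a bijection φ : P → Q preserving the orientation of every triple, then C ⊆ P satisfies conv(C) ∩ P = C if and only if φ(C) satisfies conv(φ(C)) ∩ Q = φ(C). -/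
/-- The orientation of an ordered triple of planar points: the sign of the
determinant of the 3×3 matrix of homogeneous coordinates. -/
noncomputable def orient (p q r : ℝ × ℝ) : ℝ :=
  Real.sign (Matrix.det !![p.1, p.2, 1; q.1, q.2, 1; r.1, r.2, 1])

/-- Explicit polynomial form of the homogeneous determinant. -/
def Ddet (a b c : ℝ × ℝ) : ℝ :=
  a.1*b.2 - a.1*c.2 - b.1*a.2 + b.1*c.2 + c.1*a.2 - c.1*b.2

lemma orient_eq_sign (a b c : ℝ × ℝ) : orient a b c = Real.sign (Ddet a b c) := by
  unfold orient Ddet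
  congr 1
  simp [Matrix.det_fin_three, Matrix.vecHead, Matrix.vecTail]; ring

lemma sign_eq_sign_of_div_nonneg {x y : ℝ} (hx : x ≠ 0) (hy : y ≠ 0) (h : 0 ≤ x / y) :
    Real.sign x = Real.sign y := by
  rcases div_nonneg_iff.mp h with ⟨h1, h2⟩ | ⟨h1, h2⟩
  · rw [Real.sign_of_pos (lt_of_le_of_ne h1 (Ne.symm hx)),
      Real.sign_of_pos (lt_of_le_of_ne h2 (Ne.symm hy))]
  · rw [Real.sign_of_neg (lt_of_le_of_ne h1 hx), Real.sign_of_neg (lt_of_le_of_ne h2 hy)]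

lemma div_nonneg_of_sign_eq {x y : ℝ} (hy : y ≠ 0) (h : Real.sign x = Real.sign y) :
    0 ≤ x / y := by
  rcases lt_or_gt_of_ne hy with hy' | hy'
  · rw [Real.sign_of_neg hy'] at h
    rcases lt_trichotomy x 0 with hx | hx | hx
    · exact div_nonneg_iff.mpr (Or.inr ⟨hx.le, hy'.le⟩)
    · simp [hx] at h
    · rw [Real.sign_of_pos hx] at h; norm_num at h
  · rw [Real.sign_of_pos hy'] at h
    rcases lt_trichotomy x 0 with hx | hx | hx
    · rw [Real.sign_of_neg hx] at h; norm_num at h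
    · simp [hx] at h
    · exact div_nonneg hx.le hy'.le

/-- Barycentric characterization of membership in a (nondegenerate) triangle. -/
lemma mem_triangle_iff {a b c p : ℝ × ℝ} (h : Ddet a b c ≠ 0) :
    p ∈ convexHull ℝ ({a, b, c} : Set (ℝ × ℝ)) ↔
      0 ≤ Ddet p b c / Ddet a b c ∧ 0 ≤ Ddet a p c / Ddet a b c ∧
        0 ≤ Ddet a b p / Ddet a b c := by
  constructor
  · intro hp
    rw [show ({a, b, c} : Set (ℝ × ℝ)) = insert a {b, c} from rfl,
      convexHull_insert ⟨b, by simp⟩, mem_convexJoin] at hp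
    simp only [Set.mem_singleton_iff] at hp
    obtain ⟨a', rfl, z, hz, hpz⟩ := hp
    rw [convexHull_pair] at hz
    obtain ⟨s, t, hs, ht, hst, hz⟩ := hz
    obtain ⟨u, v, hu, hv, huv, hp⟩ := hpz
    have hv' : v = 1 - u := by linarith
    have ht' : t = 1 - s := by linarith
    subst hv' ht'
    subst hz
    have h1 : p.1 = a'.1 * u + (1-u) * (s * b.1 + (1-s) * c.1) := by
      rw [← hp]; simp; ring
    have h2 : p.2 = a'.2 * u + (1-u) * (s * b.2 + (1-s) * c.2) := by
      rw [← hp]; simp; ring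
    have e1 : Ddet p b c = u * Ddet a' b c := by simp only [Ddet, h1, h2]; ring
    have e2 : Ddet a' p c = ((1-u) * s) * Ddet a' b c := by
      simp only [Ddet, h1, h2]; ring
    have e3 : Ddet a' b p = ((1-u) * (1-s)) * Ddet a' b c := by
      simp only [Ddet, h1, h2]; ring
    rw [e1, e2, e3, mul_div_cancel_right₀ _ h, mul_div_cancel_right₀ _ h,
      mul_div_cancel_right₀ _ h]
    refine ⟨hu, mul_nonneg (by linarith) hs, mul_nonneg (by linarith) (by linarith)⟩
  · rintro ⟨h1, h2, h3⟩
    set α := Ddet p b c / Ddet a b c with hα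
    set β := Ddet a p c / Ddet a b c with hβ
    set γ := Ddet a b p / Ddet a b c with hγ
    have hsum : α + β + γ = 1 := by
      rw [hα, hβ, hγ, ← add_div, ← add_div, div_eq_one_iff_eq h]
      simp only [Ddet]; ring
    have hx : α * a.1 + β * b.1 + γ * c.1 = p.1 := by
      rw [hα, hβ, hγ]; field_simp; simp only [Ddet]; ring
    have hy : α * a.2 + β * b.2 + γ * c.2 = p.2 := by
      rw [hα, hβ, hγ]; field_simp; simp only [Ddet]; ring
    have hmem := Finset.centerMass_mem_convexHull (Finset.univ : Finset (Fin 3))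
      (w := ![α, β, γ]) (z := ![a, b, c]) (s := ({a, b, c} : Set (ℝ × ℝ)))
      (by intro i _; fin_cases i <;> simpa using by assumption)
      (by rw [Fin.sum_univ_three]; simp only [Matrix.cons_val_zero, Matrix.cons_val_one,
            Matrix.head_cons, Matrix.cons_val_two, Matrix.tail_cons]; rw [hsum]; norm_num)
      (by intro i _; fin_cases i <;> simp)
    convert hmem using 1
    rw [Finset.centerMass, Fin.sum_univ_three, Fin.sum_univ_three]
    simp only [Matrix.cons_val_zero, Matrix.cons_val_one, Matrix.head_cons,
      Matrix.cons_val_two, Matrix.tail_cons]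
    rw [hsum, inv_one, one_smul]
    ext <;> simp [← hx, ← hy] <;> ring
  
lemma Ddet_eq_zero_of_mem_segment {a b p : ℝ × ℝ} (h : p ∈ segment ℝ a b) :
    Ddet a b p = 0 := by
  obtain ⟨u, v, hu, hv, huv, hp⟩ := h
  have hv' : v = 1 - u := by linarith
  subst hv'
  have h1 : p.1 = u * a.1 + (1-u) * b.1 := by rw [← hp]; simp
  have h2 : p.2 = u * a.2 + (1-u) * b.2 := by rw [← hp]; simp
  simp only [Ddet, h1, h2]; ring

/-- Main one-directional transfer lemma. -/
lemma transfer {P : Set (ℝ × ℝ)}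
    (hPgen : ∀ p₁ ∈ P, ∀ p₂ ∈ P, ∀ p₃ ∈ P,
      p₁ ≠ p₂ → p₁ ≠ p₃ → p₂ ≠ p₃ → orient p₁ p₂ p₃ ≠ 0)
    (φ : (ℝ × ℝ) → (ℝ × ℝ))
    (hor : ∀ p₁ ∈ P, ∀ p₂ ∈ P, ∀ p₃ ∈ P,
      orient (φ p₁) (φ p₂) (φ p₃) = orient p₁ p₂ p₃)
    {C : Set (ℝ × ℝ)} (hC : C ⊆ P) {p : ℝ × ℝ} (hp : p ∈ P)
    (hconv : p ∈ convexHull ℝ C) : φ p ∈ convexHull ℝ (φ '' C) := by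
  -- general position in terms of Ddet
  have hgen : ∀ p₁ ∈ P, ∀ p₂ ∈ P, ∀ p₃ ∈ P,
      p₁ ≠ p₂ → p₁ ≠ p₃ → p₂ ≠ p₃ → Ddet p₁ p₂ p₃ ≠ 0 := by
    intro p₁ h₁ p₂ h₂ p₃ h₃ h12 h13 h23
    have := hPgen p₁ h₁ p₂ h₂ p₃ h₃ h12 h13 h23
    rw [orient_eq_sign] at this
    intro hz; exact this (by rw [hz, Real.sign_zero])
  rw [convexHull_eq_union] at hconv
  simp only [Set.mem_iUnion, exists_prop] at hconv
  obtain ⟨t, htC, hai, hpt⟩ := hconv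
  have hcard : t.card ≤ 3 := by
    have h1 := hai.card_le_finrank_succ (k := ℝ)
    rw [Fintype.card_coe] at h1
    have h2 : Module.finrank ℝ (vectorSpan ℝ (Set.range ((↑) : ↥t → ℝ × ℝ))) ≤ 2 := by
      have := Submodule.finrank_le (vectorSpan ℝ (Set.range ((↑) : ↥t → ℝ × ℝ)))
      simpa using this
    omega
  have himg : ∀ x ∈ C, φ x ∈ φ '' C := fun x hx => ⟨x, hx, rfl⟩
  interval_cases hc : t.card
  · rw [Finset.card_eq_zero] at hc
    subst hc; simp at hpt
  · rw [Finset.card_eq_one] at hc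
    obtain ⟨a, rfl⟩ := hc
    simp only [Finset.coe_singleton, convexHull_singleton, Set.mem_singleton_iff] at hpt
    subst hpt
    exact subset_convexHull ℝ _ (himg p (htC (by simp)))
  · rw [Finset.card_eq_two] at hc
    obtain ⟨a, b, hab, rfl⟩ := hc
    have haC : a ∈ C := htC (by simp)
    have hbC : b ∈ C := htC (by simp)
    simp only [Finset.coe_insert, Finset.coe_singleton] at hpt
    rw [convexHull_pair] at hpt
    by_cases hpa : p = a
    · exact subset_convexHull ℝ _ (himg p (hpa ▸ haC))
    by_cases hpb : p = b
    · exact subset_convexHull ℝ _ (himg p (hpb ▸ hbC))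
    exact absurd (Ddet_eq_zero_of_mem_segment hpt)
      (hgen a (hC haC) b (hC hbC) p hp hab (fun h => hpa h.symm) (fun h => hpb h.symm))
  · rw [Finset.card_eq_three] at hc
    obtain ⟨a, b, c, hab, hac, hbc, rfl⟩ := hc
    have haC : a ∈ C := htC (by simp)
    have hbC : b ∈ C := htC (by simp)
    have hcC : c ∈ C := htC (by simp)
    have haP := hC haC; have hbP := hC hbC; have hcP := hC hcC
    simp only [Finset.coe_insert, Finset.coe_singleton] at hpt
    by_cases hpa : p = a
    · exact subset_convexHull ℝ _ (himg p (hpa ▸ haC))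
    by_cases hpb : p = b
    · exact subset_convexHull ℝ _ (himg p (hpb ▸ hbC))
    by_cases hpc : p = c
    · exact subset_convexHull ℝ _ (himg p (hpc ▸ hcC))
    have habc : Ddet a b c ≠ 0 := hgen a haP b hbP c hcP hab hac hbc
    obtain ⟨h1, h2, h3⟩ := (mem_triangle_iff habc).mp hpt
    have hpbc : Ddet p b c ≠ 0 := hgen p hp b hbP c hcP hpb hpc hbc
    have hapc : Ddet a p c ≠ 0 := hgen a haP p hp c hcP (fun h => hpa h.symm) hac hpc
    have habp : Ddet a b p ≠ 0 := hgen a haP b hbP p hp hab (fun h => hpa h.symm)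
      (fun h => hpb h.symm)
    -- sign equalities in the source
    have s1 : Real.sign (Ddet p b c) = Real.sign (Ddet a b c) :=
      sign_eq_sign_of_div_nonneg hpbc habc h1
    have s2 : Real.sign (Ddet a p c) = Real.sign (Ddet a b c) :=
      sign_eq_sign_of_div_nonneg hapc habc h2
    have s3 : Real.sign (Ddet a b p) = Real.sign (Ddet a b c) :=
      sign_eq_sign_of_div_nonneg habp habc h3
    -- transfer to the image
    have habc' : Ddet (φ a) (φ b) (φ c) ≠ 0 := by
      intro hz
      have := hor a haP b hbP c hcP
      rw [orient_eq_sign, orient_eq_sign, hz, Real.sign_zero] at this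
      exact habc (Real.sign_eq_zero_iff.mp this.symm)
    have key : ∀ x ∈ P, ∀ y ∈ P, ∀ z ∈ P,
        Real.sign (Ddet x y z) = Real.sign (Ddet a b c) →
        Real.sign (Ddet (φ x) (φ y) (φ z)) = Real.sign (Ddet (φ a) (φ b) (φ c)) := by
      intro x hx y hy z hz hs
      have e1 := hor x hx y hy z hz
      have e2 := hor a haP b hbP c hcP
      rw [orient_eq_sign, orient_eq_sign] at e1 e2
      rw [e1, e2, hs]
    have m := (mem_triangle_iff habc').mpr
      ⟨div_nonneg_of_sign_eq habc' (key p hp b hbP c hcP s1),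
       div_nonneg_of_sign_eq habc' (key a haP p hp c hcP s2),
       div_nonneg_of_sign_eq habc' (key a haP b hbP p hp s3)⟩
    refine convexHull_mono ?_ m
    intro x hx
    rcases hx with rfl | rfl | rfl
    exacts [himg a haC, himg b hbC, himg c hcC]

/-- the order type determines the induced convex geometry.
If two finite planar point sets in general position are related by an
orientation-preserving bijection φ, then a subset C of P is convexly closed
iff its image φ(C) is convexly closed. -/
theorem orderType_determines_convexGeometry (P Q : Set (ℝ × ℝ))
    (hPfin : P.Finite) (hQfin : Q.Finite)
    (hPgen : ∀ p₁ ∈ P, ∀ p₂ ∈ P, ∀ p₃ ∈ P,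
      p₁ ≠ p₂ → p₁ ≠ p₃ → p₂ ≠ p₃ → orient p₁ p₂ p₃ ≠ 0)
    (hQgen : ∀ q₁ ∈ Q, ∀ q₂ ∈ Q, ∀ q₃ ∈ Q,
      q₁ ≠ q₂ → q₁ ≠ q₃ → q₂ ≠ q₃ → orient q₁ q₂ q₃ ≠ 0)
    (φ : (ℝ × ℝ) → (ℝ × ℝ)) (hφ : Set.BijOn φ P Q)
    (hor : ∀ p₁ ∈ P, ∀ p₂ ∈ P, ∀ p₃ ∈ P,
      orient (φ p₁) (φ p₂) (φ p₃) = orient p₁ p₂ p₃)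
    (C : Set (ℝ × ℝ)) (hC : C ⊆ P) :
    convexHull ℝ C ∩ P = C ↔ convexHull ℝ (φ '' C) ∩ Q = φ '' C := by
  set ψ := Function.invFunOn φ P with hψdef
  have hinv : Set.InvOn ψ φ P Q := hφ.invOn_invFunOn
  have hψ : Set.BijOn ψ Q P := Set.BijOn.symm hinv.symm hφ
  have horψ : ∀ q₁ ∈ Q, ∀ q₂ ∈ Q, ∀ q₃ ∈ Q,
      orient (ψ q₁) (ψ q₂) (ψ q₃) = orient q₁ q₂ q₃ := by
    intro q₁ h₁ q₂ h₂ q₃ h₃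
    have := hor (ψ q₁) (hψ.mapsTo h₁) (ψ q₂) (hψ.mapsTo h₂) (ψ q₃) (hψ.mapsTo h₃)
    rw [hinv.2 h₁, hinv.2 h₂, hinv.2 h₃] at this
    exact this.symm
  have hφC : φ '' C ⊆ Q := fun x ⟨c, hc, h⟩ => h ▸ hφ.mapsTo (hC hc)
  have hψφC : ψ '' (φ '' C) = C := by
    apply Set.Subset.antisymm
    · rintro _ ⟨_, ⟨c, hc, rfl⟩, rfl⟩
      rw [hinv.1 (hC hc)]; exact hc
    · intro c hc
      exact ⟨φ c, ⟨c, hc, rfl⟩, hinv.1 (hC hc)⟩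
  constructor
  · intro h
    apply subset_antisymm
    · rintro x ⟨hxconv, hxQ⟩
      have hmem : ψ x ∈ convexHull ℝ (ψ '' (φ '' C)) :=
        transfer hQgen ψ horψ hφC hxQ hxconv
      rw [hψφC] at hmem
      have hx : ψ x ∈ C := by
        rw [← h]; exact ⟨hmem, hψ.mapsTo hxQ⟩
      exact ⟨ψ x, hx, hinv.2 hxQ⟩
    · exact Set.subset_inter (subset_convexHull ℝ _) hφC
  · intro h
    apply subset_antisymm
    · rintro x ⟨hxconv, hxP⟩
      have hmem : φ x ∈ convexHull ℝ (φ '' C) := transfer hPgen φ hor hC hxP hxconv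
      have : φ x ∈ φ '' C := by rw [← h]; exact ⟨hmem, hφ.mapsTo hxP⟩
      obtain ⟨c, hc, hcx⟩ := this
      rwa [← hφ.injOn (hC hc) hxP hcx]
    · exact Set.subset_inter (subset_convexHull ℝ _) hC
end

section
/- In a double ring configuration D_{2k} (k ≥ 2), for each index i, the set C = {r_i} ∪ {r_{i+1}, r'_{i+1}, …, r_{i+(k-1)}, r'_{i+(k-1)}} (indices mod 2k appropriately) is convexly closed: conv(C) ∩ D_{2k} = C. -/
open Real

private lemma dr_halfspace {C : Set (ℝ × ℝ)} (a b c : ℝ)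
    (hC : ∀ x ∈ C, a * x.1 + b * x.2 < c) :
    ∀ x ∈ convexHull ℝ C, a * x.1 + b * x.2 < c := by
  have hlin : IsLinearMap ℝ (fun x : ℝ × ℝ => a * x.1 + b * x.2) := by
    constructor
    · intro x y; simp only [Prod.fst_add, Prod.snd_add]; ring
    · intro c x; simp only [Prod.smul_fst, Prod.smul_snd, smul_eq_mul]; ring
  intro x hx
  exact convexHull_min hC (convex_halfSpace_lt hlin c) hx

private lemma dr_sin_lower {a β : ℝ} (ha0 : 0 ≤ a)
    (h1 : a ≤ β) (h2 : β ≤ π - a) : Real.sin a ≤ Real.sin β := by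
  have hπ := Real.pi_pos
  rcases le_total β (π / 2) with h | h
  · exact Real.sin_le_sin_of_le_of_le_pi_div_two (by linarith) h h1
  · rw [← Real.sin_pi_sub β]
    exact Real.sin_le_sin_of_le_of_le_pi_div_two (by linarith) (by linarith) (by linarith)

set_option maxHeartbeats 1000000 in
/-- in the double ring D_{2k} (k ≥ 2), for each index i the set
C = {r_i} ∪ {r_{i+1}, r'_{i+1}, …, r_{i+(k-1)}, r'_{i+(k-1)}} is convexly
closed: conv(C) ∩ D_{2k} = C. -/
theorem doubleRing_convex_set (k : ℕ) (hk : 2 ≤ k) (R ε : ℝ)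
    (hR : 0 < R) (hε : 0 < ε) (hεR : ε < R)
    (r r' : ZMod (2 * k) → ℝ × ℝ)
    (hr : ∀ j : ZMod (2 * k),
      r j = (R * Real.cos (2 * Real.pi * (j.val : ℝ) / (2 * k)),
             R * Real.sin (2 * Real.pi * (j.val : ℝ) / (2 * k))))
    (hr' : ∀ j : ZMod (2 * k),
      r' j = ((R - ε) * Real.cos (2 * Real.pi * (j.val : ℝ) / (2 * k)),
              (R - ε) * Real.sin (2 * Real.pi * (j.val : ℝ) / (2 * k))))
    (hvertex : ∀ j : ZMod (2 * k),
      r' j ∉ convexHull ℝ ((Set.range r ∪ Set.range r') \ {r j, r' j}))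
    (i : ZMod (2 * k)) :
    convexHull ℝ
        ({r i} ∪ ⋃ m ∈ Finset.Icc 1 (k - 1),
          ({r (i + (m : ZMod (2 * k))), r' (i + (m : ZMod (2 * k)))} : Set (ℝ × ℝ))) ∩
        (Set.range r ∪ Set.range r') =
      {r i} ∪ ⋃ m ∈ Finset.Icc 1 (k - 1),
        ({r (i + (m : ZMod (2 * k))), r' (i + (m : ZMod (2 * k)))} : Set (ℝ × ℝ)) := by
  clear hvertex
  haveI : NeZero (2 * k) := ⟨by omega⟩
  have hπ := Real.pi_pos
  have hk0 : (0 : ℝ) < (k : ℝ) := by exact_mod_cast (by omega : 0 < k)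
  have hk2 : (2 : ℝ) ≤ (k : ℝ) := by exact_mod_cast hk
  have hRε : 0 < R - ε := by linarith
  set C : Set (ℝ × ℝ) := {r i} ∪ ⋃ m ∈ Finset.Icc 1 (k - 1),
      ({r (i + (m : ZMod (2 * k))), r' (i + (m : ZMod (2 * k)))} : Set (ℝ × ℝ)) with hCdef
  -- the angle of the point with index i + m
  set θ : ℕ → ℝ := fun m => π * ((i.val : ℝ) + m) / k with hθdef
  -- coordinates of the points
  have hpt : ∀ m : ℕ,
      r (i + (m : ZMod (2 * k))) = (R * Real.cos (θ m), R * Real.sin (θ m)) ∧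
      r' (i + (m : ZMod (2 * k))) = ((R - ε) * Real.cos (θ m), (R - ε) * Real.sin (θ m)) := by
    intro m
    set j := i + (m : ZMod (2 * k)) with hj
    have hv : j.val = (i.val + m) % (2 * k) := by
      rw [hj, ZMod.val_add, ZMod.val_natCast]
      conv_rhs => rw [Nat.add_mod]
      rw [Nat.mod_eq_of_lt (ZMod.val_lt i)]
    have hdiv : 2 * k * ((i.val + m) / (2 * k)) + j.val = i.val + m := by
      have h := Nat.div_add_mod (i.val + m) (2 * k)
      rw [hv]; exact h
    set t := (i.val + m) / (2 * k) with ht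
    have hcastd : ((i.val : ℝ) + m) = 2 * k * t + (j.val : ℝ) := by
      exact_mod_cast congrArg (Nat.cast : ℕ → ℝ) hdiv.symm
    have hreal : θ m = 2 * π * (j.val : ℝ) / (2 * k) + t * (2 * π) := by
      rw [hθdef]; simp only []
      rw [hcastd]; field_simp; ring
    have hc : Real.cos (2 * π * (j.val : ℝ) / (2 * k)) = Real.cos (θ m) := by
      rw [hreal, Real.cos_add_nat_mul_two_pi]
    have hs : Real.sin (2 * π * (j.val : ℝ) / (2 * k)) = Real.sin (θ m) := by
      rw [hreal, Real.sin_add_nat_mul_two_pi]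
    exact ⟨by rw [hr j, hc, hs], by rw [hr' j, hc, hs]⟩
  have hri : r i = (R * Real.cos (θ 0), R * Real.sin (θ 0)) := by
    simpa using (hpt 0).1
  have hri' : r' i = ((R - ε) * Real.cos (θ 0), (R - ε) * Real.sin (θ 0)) := by
    simpa using (hpt 0).2
  have hθsub : ∀ m : ℕ, θ m - θ 0 = π * m / k := by
    intro m; rw [hθdef]; simp only []; push_cast; field_simp; ring
  ---- Functional 1 : direction bisecting the arc of C ----
  set y : ℝ := π * ((k : ℝ) - 1) / (2 * k) with hy
  have hy0 : 0 ≤ y := by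
    rw [hy]; apply div_nonneg (by nlinarith) (by positivity)
  have hyπ2 : y < π / 2 := by
    rw [hy, div_lt_div_iff₀ (by positivity) (by norm_num : (0:ℝ) < 2)]
    nlinarith
  have hc' : 0 < Real.cos y := Real.cos_pos_of_mem_Ioo ⟨by linarith, hyπ2⟩
  set A : ℕ → ℝ := fun m => θ m - (θ 0 + y) with hA
  have hAval : ∀ m : ℕ, A m = π / (2 * k) * (2 * m - ((k : ℝ) - 1)) := by
    intro m
    have h1 : A m = (θ m - θ 0) - y := by rw [hA]; ring
    rw [h1, hθsub m, hy]; field_simp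
  have hval1 : ∀ (ρ : ℝ) (m : ℕ),
      (-(Real.cos (θ 0 + y))) * (ρ * Real.cos (θ m)) +
        (-(Real.sin (θ 0 + y))) * (ρ * Real.sin (θ m)) = -(ρ * Real.cos (A m)) := by
    intro ρ m
    have : A m = θ m - (θ 0 + y) := rfl
    rw [this, Real.cos_sub]; ring
  -- bound on the C side
  have hboundC : ∀ m : ℕ, m ≤ k - 1 → Real.cos y ≤ Real.cos (A m) := by
    intro m hm
    have hmr : (m : ℝ) ≤ (k : ℝ) - 1 := by
      have : m + 1 ≤ k := by omega
      have := (Nat.cast_le (α := ℝ)).mpr this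
      push_cast at this; linarith
    have hmr0 : (0 : ℝ) ≤ (m : ℝ) := Nat.cast_nonneg m
    have habs : |A m| ≤ y := by
      rw [hAval m]
      have hy' : y = π / (2 * k) * ((k : ℝ) - 1) := by rw [hy]; ring
      rw [abs_mul, abs_of_pos (by positivity : (0:ℝ) < π / (2 * k)), hy']
      apply mul_le_mul_of_nonneg_left _ (by positivity)
      rw [abs_le]; constructor <;> linarith
    calc Real.cos y ≤ Real.cos |A m| :=
          Real.cos_le_cos_of_nonneg_of_le_pi (abs_nonneg _) (by linarith) habs
      _ = Real.cos (A m) := Real.cos_abs _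
  -- bound on the outside
  have hsinpos : 0 < Real.sin (π / (2 * k)) :=
    Real.sin_pos_of_pos_of_lt_pi (by positivity)
      (by rw [div_lt_iff₀ (by positivity)]; nlinarith)
  have hboundOut : ∀ m : ℕ, k ≤ m → m < 2 * k →
      Real.cos (A m) ≤ -Real.sin (π / (2 * k)) := by
    intro m hm1 hm2
    have hmr1 : (k : ℝ) ≤ (m : ℝ) := by exact_mod_cast hm1
    have hmr2 : (m : ℝ) ≤ 2 * (k : ℝ) - 1 := by
      have : m + 1 ≤ 2 * k := by omega
      have := (Nat.cast_le (α := ℝ)).mpr this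
      push_cast at this; linarith
    set B : ℝ := π / (2 * k) * (2 * m - 2 * (k : ℝ) + 1) with hB
    have hsplit : A m = π / 2 + B := by
      rw [hAval m, hB]; field_simp; ring
    have hcB : Real.cos (A m) = -Real.sin B := by
      rw [hsplit, Real.cos_add]; simp
    rw [hcB, neg_le_neg_iff]
    apply dr_sin_lower (by positivity)
    · rw [hB]
      have h1 : (1 : ℝ) ≤ 2 * (m:ℝ) - 2 * (k:ℝ) + 1 := by linarith
      nlinarith [hπ, hk0, mul_le_mul_of_nonneg_left h1 (le_of_lt (by positivity : (0:ℝ) < π / (2*k)))]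
    · rw [hB]
      have hmax : π - π / (2 * k) = π / (2 * k) * (2 * (k:ℝ) - 1) := by
        field_simp
      rw [hmax]
      apply mul_le_mul_of_nonneg_left _ (by positivity)
      linarith
  -- all of C is strictly inside the halfspace g₁ < 0
  have hC1 : ∀ x ∈ C, (-(Real.cos (θ 0 + y))) * x.1 + (-(Real.sin (θ 0 + y))) * x.2 < 0 := by
    have hcore : ∀ m : ℕ, m ≤ k - 1 → ∀ ρ : ℝ, 0 < ρ →
        (-(Real.cos (θ 0 + y))) * (ρ * Real.cos (θ m)) +
          (-(Real.sin (θ 0 + y))) * (ρ * Real.sin (θ m)) < 0 := by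
      intro m hm ρ hρ
      rw [hval1]
      have h1 := hboundC m hm
      nlinarith
    intro x hx
    rcases hx with hx | hx
    · rw [Set.mem_singleton_iff] at hx
      rw [hx, hri]
      exact hcore 0 (by omega) R hR
    · simp only [Set.mem_iUnion, Finset.mem_Icc, Set.mem_insert_iff,
        Set.mem_singleton_iff] at hx
      obtain ⟨m, ⟨hm1, hm2⟩, hx | hx⟩ := hx
      · rw [hx, (hpt m).1]; exact hcore m hm2 R hR
      · rw [hx, (hpt m).2]; exact hcore m hm2 (R - ε) hRε
  -- outside points are not in the hull
  have houtside : ∀ m : ℕ, k ≤ m → m < 2 * k →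
      r (i + (m : ZMod (2 * k))) ∉ convexHull ℝ C ∧
      r' (i + (m : ZMod (2 * k))) ∉ convexHull ℝ C := by
    intro m hm1 hm2
    have hkey : ∀ ρ : ℝ, R - ε ≤ ρ → (ρ * Real.cos (θ m), ρ * Real.sin (θ m)) ∉ convexHull ℝ C := by
      intro ρ hρ hmem
      have h1 := dr_halfspace _ _ _ hC1 _ hmem
      simp only at h1
      rw [hval1] at h1
      have h2 := hboundOut m hm1 hm2
      nlinarith
    exact ⟨(hpt m).1 ▸ hkey R (by linarith), (hpt m).2 ▸ hkey (R - ε) le_rfl⟩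
  ---- Functional 2 : r' i is outside the hull ----
  set lam : ℝ := 2 / Real.cos y with hlam
  set a₂ : ℝ := -(Real.cos (θ 0)) + lam * Real.sin (θ 0) with ha₂
  set b₂ : ℝ := -(Real.sin (θ 0)) - lam * Real.cos (θ 0) with hb₂
  have hval2 : ∀ (ρ : ℝ) (m : ℕ),
      a₂ * (ρ * Real.cos (θ m)) + b₂ * (ρ * Real.sin (θ m)) =
        -(ρ * (Real.cos (θ m - θ 0) + lam * Real.sin (θ m - θ 0))) := by
    intro ρ m
    rw [Real.cos_sub, Real.sin_sub, ha₂, hb₂]; ring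
  have hE : ∀ m : ℕ, 1 ≤ m → m ≤ k - 1 →
      1 < Real.cos (π * m / k) + lam * Real.sin (π * m / k) := by
    intro m hm1 hm2
    have hmr1 : (1 : ℝ) ≤ (m : ℝ) := by exact_mod_cast hm1
    have hmr : (m : ℝ) ≤ (k : ℝ) - 1 := by
      have : m + 1 ≤ k := by omega
      have := (Nat.cast_le (α := ℝ)).mpr this
      push_cast at this; linarith
    set x : ℝ := π * m / (2 * k) with hx
    have hx0 : 0 < x := by rw [hx]; apply div_pos (by nlinarith) (by positivity)
    have hxy : x ≤ y := by
      rw [hx, hy]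
      have h2k : (0:ℝ) < 2 * (k:ℝ) := by positivity
      gcongr
    have hs0 : 0 < Real.sin x := Real.sin_pos_of_pos_of_lt_pi hx0 (by linarith)
    have hcx : Real.cos y ≤ Real.cos x :=
      Real.cos_le_cos_of_nonneg_of_le_pi (le_of_lt hx0) (by linarith) hxy
    have hc0 : 0 < Real.cos x := lt_of_lt_of_le hc' hcx
    have hlamc : 2 ≤ lam * Real.cos x := by
      rw [hlam]
      have h2 := mul_le_mul_of_nonneg_left hcx (le_of_lt (by positivity : (0:ℝ) < 2 / Real.cos y))
      rwa [div_mul_cancel₀ 2 (ne_of_gt hc')] at h2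
    have h2x : π * (m : ℝ) / k = 2 * x := by rw [hx]; field_simp
    rw [h2x, Real.cos_two_mul, Real.sin_two_mul]
    have hpyth := Real.sin_sq_add_cos_sq x
    have hs1 := Real.sin_le_one x
    nlinarith [mul_le_mul_of_nonneg_left hlamc (le_of_lt hs0),
      mul_nonneg (le_of_lt hs0) (by linarith : (0:ℝ) ≤ 1 - Real.sin x)]
  have hC2 : ∀ x ∈ C, a₂ * x.1 + b₂ * x.2 < -(R - ε) := by
    intro x hx
    rcases hx with hx | hx
    · rw [Set.mem_singleton_iff] at hx
      rw [hx, hri]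
      show a₂ * (R * Real.cos (θ 0)) + b₂ * (R * Real.sin (θ 0)) < -(R - ε)
      rw [hval2, sub_self, Real.cos_zero, Real.sin_zero]
      simp only [mul_zero, add_zero, mul_one]
      linarith
    · simp only [Set.mem_iUnion, Finset.mem_Icc, Set.mem_insert_iff,
        Set.mem_singleton_iff] at hx
      have hcore : ∀ m : ℕ, 1 ≤ m → m ≤ k - 1 → ∀ ρ : ℝ, R - ε ≤ ρ →
          a₂ * (ρ * Real.cos (θ m)) + b₂ * (ρ * Real.sin (θ m)) < -(R - ε) := by
        intro m h1 h2 ρ hρ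
        rw [hval2, hθsub m]
        have hEm := hE m h1 h2
        nlinarith
      obtain ⟨m, ⟨hm1, hm2⟩, hx | hx⟩ := hx
      · rw [hx, (hpt m).1]; exact hcore m hm1 hm2 R (by linarith)
      · rw [hx, (hpt m).2]; exact hcore m hm1 hm2 (R - ε) le_rfl
  have hr'i_not : r' i ∉ convexHull ℝ C := by
    intro hmem
    have h1 := dr_halfspace _ _ _ hC2 _ hmem
    rw [hri'] at h1
    simp only at h1
    rw [hval2, sub_self, Real.cos_zero, Real.sin_zero] at h1
    simp only [mul_zero, add_zero, mul_one] at h1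
    linarith
  ---- assembling the result ----
  apply Set.Subset.antisymm
  · rintro x ⟨hxh, hxD⟩
    have hmain : ∀ j : ZMod (2 * k), (x = r j ∨ x = r' j) → x ∈ C := by
      intro j hxj
      set m : ℕ := (j - i).val with hm
      have hjm : j = i + (m : ZMod (2 * k)) := by
        rw [hm, ZMod.natCast_zmod_val]; ring
      have hmlt : m < 2 * k := ZMod.val_lt _
      by_cases hmk : m < k
      · rcases Nat.eq_zero_or_pos m with h0 | h1
        · rcases hxj with hxj | hxj
          · left
            rw [hxj, hjm, h0]
            simp
          · exfalso
            apply hr'i_not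
            have : j = i := by rw [hjm, h0]; simp
            rw [← this, ← hxj]
            exact hxh
        · right
          rw [Set.mem_iUnion₂]
          refine ⟨m, Finset.mem_Icc.mpr ⟨h1, by omega⟩, ?_⟩
          rcases hxj with hxj | hxj
          · left; rw [hxj, hjm]
          · right; rw [hxj, hjm]; exact rfl
      · exfalso
        have hout := houtside m (le_of_not_gt hmk) hmlt
        rcases hxj with hxj | hxj
        · exact hout.1 (by rw [← hjm, ← hxj]; exact hxh)
        · exact hout.2 (by rw [← hjm, ← hxj]; exact hxh)
    rcases hxD with ⟨j, hj⟩ | ⟨j, hj⟩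
    · exact hmain j (Or.inl hj.symm)
    · exact hmain j (Or.inr hj.symm)
  · intro x hx
    refine ⟨subset_convexHull ℝ C hx, ?_⟩
    rcases hx with hx | hx
    · rw [Set.mem_singleton_iff] at hx
      exact Or.inl ⟨i, hx.symm⟩
    · simp only [Set.mem_iUnion, Set.mem_insert_iff, Set.mem_singleton_iff] at hx
      obtain ⟨m, _, hx | hx⟩ := hx
      · exact Or.inl ⟨_, hx.symm⟩
      · exact Or.inr ⟨_, hx.symm⟩
end

section
/- In the double ring convex geometry (D_{2k}, C_{2k}), any convexly closed set C containing r_i but not r'_i that is inclusion-wise maximal with this property equals either {r_i} ∪ {r_{i+1}, r'_{i+1}, …, r_{i+(k-1)}, r'_{i+(k-1)}} or {r_i} ∪ {r_{i-1}, r'_{i-1}, …, r_{i-(k-1)}, r'_{i-(k-1)}}. -/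
open Real

noncomputable def dpt (ρ ψ : ℝ) : ℝ × ℝ := (ρ * Real.cos ψ, ρ * Real.sin ψ)

lemma dlin (a b : ℝ) : IsLinearMap ℝ (fun p : ℝ × ℝ => a * p.1 + b * p.2) :=
  ⟨fun x y => by simp [Prod.fst_add, Prod.snd_add]; ring,
   fun c x => by simp [Prod.smul_fst, Prod.smul_snd, smul_eq_mul]; ring⟩

lemma hull_lt {s : Set (ℝ × ℝ)} {a b c : ℝ} (h : ∀ x ∈ s, a * x.1 + b * x.2 < c)
    {y : ℝ × ℝ} (hy : y ∈ convexHull ℝ s) : a * y.1 + b * y.2 < c :=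
  convexHull_min h (convex_halfSpace_lt (dlin a b) c) hy

lemma hull_ge {s : Set (ℝ × ℝ)} {a b c : ℝ} (h : ∀ x ∈ s, c ≤ a * x.1 + b * x.2)
    {y : ℝ × ℝ} (hy : y ∈ convexHull ℝ s) : c ≤ a * y.1 + b * y.2 :=
  convexHull_min h (convex_halfSpace_ge (dlin a b) c) hy

lemma combo3 {s : Set (ℝ × ℝ)} {x y z : ℝ × ℝ} (hx : x ∈ s) (hy : y ∈ s) (hz : z ∈ s)
    {a b c : ℝ} (ha : 0 ≤ a) (hb : 0 ≤ b) (hc : 0 ≤ c) (habc : a + b + c = 1) :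
    a • x + b • y + c • z ∈ convexHull ℝ s := by
  have h := Finset.centerMass_mem_convexHull (s := s) (Finset.univ : Finset (Fin 3))
    (w := ![a, b, c]) (z := ![x, y, z]) ?_ ?_ ?_
  · simpa [Finset.centerMass, Fin.sum_univ_three, habc, add_assoc] using h
  · intro j _; fin_cases j <;> simpa
  · simp [Fin.sum_univ_three, habc]
  · intro j _; fin_cases j <;> simpa

lemma center_mem (R ε ρ1 ρ2 θ α β : ℝ) (hε : 0 < ε) (hεR : ε < R)
    (hρ1 : 0 < ρ1) (hρ1R : ρ1 ≤ R) (hρ2 : 0 < ρ2) (hρ2R : ρ2 ≤ R)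
    (hsα : 0 < Real.sin α) (hsβ : 0 < Real.sin β)
    (hcα : R * Real.cos α ≤ R - ε) (hcβ : R * Real.cos β ≤ R - ε) :
    ∃ l0 l1 l2 : ℝ, 0 ≤ l0 ∧ 0 ≤ l1 ∧ 0 ≤ l2 ∧ l0 + l1 + l2 = 1 ∧
      l0 • dpt R θ + l1 • dpt ρ1 (θ + α) + l2 • dpt ρ2 (θ - β) = dpt (R - ε) θ := by
  have ha2 : ρ1 * Real.cos α ≤ R - ε := by
    rcases le_or_gt 0 (Real.cos α) with h | h
    · nlinarith
    · nlinarith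
  have hb2 : ρ2 * Real.cos β ≤ R - ε := by
    rcases le_or_gt 0 (Real.cos β) with h | h
    · nlinarith
    · nlinarith
  set coef : ℝ := ρ2 * Real.sin β * (R - ρ1 * Real.cos α) + ρ1 * Real.sin α * (R - ρ2 * Real.cos β) with hcoef
  have hcoefpos : 0 < coef := by
    have h1 : 0 < R - ρ1 * Real.cos α := by nlinarith
    have h2 : 0 < R - ρ2 * Real.cos β := by nlinarith
    positivity
  refine ⟨1 - ε / coef * (ρ2 * Real.sin β) - ε / coef * (ρ1 * Real.sin α),
    ε / coef * (ρ2 * Real.sin β), ε / coef * (ρ1 * Real.sin α), ?_, ?_, ?_, by ring, ?_⟩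
  · have key : ε * (ρ2 * Real.sin β + ρ1 * Real.sin α) ≤ coef := by
      nlinarith [mul_le_mul_of_nonneg_left hb2 (le_of_lt (mul_pos hρ1 hsα)),
        mul_le_mul_of_nonneg_left ha2 (le_of_lt (mul_pos hρ2 hsβ))]
    have h3 : ε / coef * (ρ2 * Real.sin β) + ε / coef * (ρ1 * Real.sin α)
        = ε * (ρ2 * Real.sin β + ρ1 * Real.sin α) / coef := by ring
    have h4 : ε * (ρ2 * Real.sin β + ρ1 * Real.sin α) / coef ≤ 1 :=
      (div_le_one hcoefpos).mpr key
    linarith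
  · positivity
  · positivity
  · apply Prod.ext <;>
    · simp only [dpt, Prod.smul_mk, smul_eq_mul, Prod.mk_add_mk, Real.cos_add, Real.sin_add,
        Real.cos_sub, Real.sin_sub]
      field_simp
      ring

lemma antip_mem (R ε ρ θ : ℝ) (hε : 0 < ε) (hεR : ε < R) (hρ : 0 < ρ) :
    ∃ t : ℝ, 0 ≤ t ∧ t ≤ 1 ∧
      t • dpt R θ + (1 - t) • dpt ρ (θ + π) = dpt (R - ε) θ := by
  have hd : 0 < ρ + R := by linarith
  refine ⟨(ρ + R - ε) / (ρ + R), by apply div_nonneg _ hd.le; linarith,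
    by rw [div_le_one hd]; linarith, ?_⟩
  apply Prod.ext <;>
  · simp only [dpt, Prod.smul_mk, smul_eq_mul, Prod.mk_add_mk, Real.cos_add_pi, Real.sin_add_pi]
    field_simp
    ring

set_option maxHeartbeats 1000000 in
/-- in the double ring convex geometry (D_{2k}, C_{2k}), any
convexly closed set containing r_i but not r'_i that is inclusion-wise maximal
with this property is {r_i} ∪ {r_{i+1}, r'_{i+1}, …, r_{i+(k-1)}, r'_{i+(k-1)}}
or {r_i} ∪ {r_{i-1}, r'_{i-1}, …, r_{i-(k-1)}, r'_{i-(k-1)}}. -/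
theorem doubleRing_maximal_convex_sets (k : ℕ) (hk : 2 ≤ k) (R ε : ℝ)
    (hR : 0 < R) (hε : 0 < ε) (hεR : ε < R)
    (r r' : ZMod (2 * k) → ℝ × ℝ)
    (hr : ∀ j : ZMod (2 * k),
      r j = (R * Real.cos (2 * Real.pi * (j.val : ℝ) / (2 * k)),
             R * Real.sin (2 * Real.pi * (j.val : ℝ) / (2 * k))))
    (hr' : ∀ j : ZMod (2 * k),
      r' j = ((R - ε) * Real.cos (2 * Real.pi * (j.val : ℝ) / (2 * k)),
              (R - ε) * Real.sin (2 * Real.pi * (j.val : ℝ) / (2 * k))))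
    (hvertex : ∀ j : ZMod (2 * k),
      r' j ∉ convexHull ℝ ((Set.range r ∪ Set.range r') \ {r j, r' j}))
    (i : ZMod (2 * k)) (C : Set (ℝ × ℝ))
    (hCD : C ⊆ Set.range r ∪ Set.range r')
    (hCclosed : convexHull ℝ C ∩ (Set.range r ∪ Set.range r') = C)
    (hri : r i ∈ C) (hri' : r' i ∉ C)
    (hmax : ∀ C' : Set (ℝ × ℝ), C ⊆ C' → C' ⊆ Set.range r ∪ Set.range r' →
      convexHull ℝ C' ∩ (Set.range r ∪ Set.range r') = C' →
      r i ∈ C' → r' i ∉ C' → C' = C) :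
    C = {r i} ∪ ⋃ m ∈ Finset.Icc 1 (k - 1),
          ({r (i + (m : ZMod (2 * k))), r' (i + (m : ZMod (2 * k)))} : Set (ℝ × ℝ)) ∨
    C = {r i} ∪ ⋃ m ∈ Finset.Icc 1 (k - 1),
          ({r (i - (m : ZMod (2 * k))), r' (i - (m : ZMod (2 * k)))} : Set (ℝ × ℝ)) := by
  haveI : NeZero (2 * k) := ⟨by omega⟩
  have hkpos : (0:ℝ) < k := by exact_mod_cast (by omega : 0 < k)
  have hkR : (k : ℝ) ≠ 0 := ne_of_gt hkpos
  have h2k : (2:ℝ) ≤ k := by exact_mod_cast hk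
  set D : Set (ℝ × ℝ) := Set.range r ∪ Set.range r' with hD
  set δ : ℝ := π / k with hδ
  set θ : ℝ := 2 * π * (i.val : ℝ) / (2 * k) with hθ
  have hδpos : 0 < δ := by rw [hδ]; positivity
  have hδle2 : δ ≤ π / 2 := by
    rw [hδ, div_le_div_iff₀ hkpos two_pos]; nlinarith [Real.pi_pos]
  have hδltπ : δ < π := by nlinarith [Real.pi_pos]
  have hsinδ : 0 < Real.sin δ := Real.sin_pos_of_pos_of_lt_pi hδpos hδltπ
  have hcosδ0 : 0 ≤ Real.cos δ :=
    Real.cos_nonneg_of_mem_Icc ⟨by linarith, hδle2⟩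
  have hcosδ1 : Real.cos δ < 1 := by
    nlinarith [Real.sin_sq_add_cos_sq δ, Real.neg_one_le_cos δ]
  have hkδ : (k:ℝ) * δ = π := by rw [hδ]; field_simp
  have h2kδ : (2*(k:ℝ)) * δ = 2*π := by rw [hδ]; field_simp
  -- coordinates
  have hcoord : ∀ (ρ : ℝ) (f : ZMod (2*k) → ℝ × ℝ),
      (∀ j, f j = (ρ * Real.cos (2 * π * (j.val : ℝ) / (2*k)),
                   ρ * Real.sin (2 * π * (j.val : ℝ) / (2*k)))) →
      ∀ c : ℕ, f (i + (c : ZMod (2*k))) = dpt ρ (θ + c * δ) := by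
    intro ρ f hf c
    have hval : (i + (c : ZMod (2*k))).val = (i.val + c % (2*k)) % (2*k) := by
      rw [ZMod.val_add, ZMod.val_natCast]
    have hmod : (i + (c : ZMod (2*k))).val ≡ i.val + c [MOD 2*k] := by
      rw [hval]
      exact (Nat.mod_modEq _ _).trans (Nat.ModEq.add_left _ (Nat.mod_modEq c _))
    obtain ⟨d, hd⟩ := Nat.ModEq.dvd hmod
    have hdr : ((i + (c : ZMod (2*k))).val : ℝ) = (i.val : ℝ) + c - (2*k) * d := by
      have h2 : ((i + (c : ZMod (2*k))).val : ℤ) = (i.val : ℤ) + c - (2*k) * d := by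
        push_cast at hd; linarith
      exact_mod_cast congrArg (Int.cast : ℤ → ℝ) h2
    have hang : 2 * π * ((i + (c : ZMod (2*k))).val : ℝ) / (2*k)
        = (θ + c * δ) + ((-d : ℤ) : ℝ) * (2 * π) := by
      rw [hdr, hθ, hδ]
      push_cast
      field_simp
      ring
    rw [hf, hang, dpt, Real.cos_add_int_mul_two_pi, Real.sin_add_int_mul_two_pi]
  have coordR : ∀ c : ℕ, r (i + (c : ZMod (2*k))) = dpt R (θ + c * δ) := hcoord R r hr
  have coordR' : ∀ c : ℕ, r' (i + (c : ZMod (2*k))) = dpt (R - ε) (θ + c * δ) := hcoord (R-ε) r' hr'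
  have hriD : r i = dpt R θ := by rw [hr i, dpt]
  have hr'iD : r' i = dpt (R - ε) θ := by rw [hr' i, dpt]
  have hr'iD2 : r' i ∈ D := Or.inr ⟨i, rfl⟩
  have dpt_per : ∀ ρ x, dpt ρ (x + 2*π) = dpt ρ x := by
    intro ρ x; simp [dpt, Real.cos_add_two_pi, Real.sin_add_two_pi]
  -- sin/cos bounds on multiples of δ
  have hmδleπ : ∀ m : ℕ, m ≤ k - 1 → (m:ℝ) * δ ≤ π - δ := by
    intro m hm
    have hmk : (m:ℝ) ≤ (k:ℝ) - 1 := by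
      have : (m:ℝ) ≤ ((k - 1 : ℕ) : ℝ) := by exact_mod_cast hm
      rwa [Nat.cast_sub (by omega), Nat.cast_one] at this
    nlinarith
  have sinb : ∀ m : ℕ, 1 ≤ m → m ≤ k - 1 → Real.sin δ ≤ Real.sin ((m:ℝ) * δ) := by
    intro m h1 h2
    have hm1 : δ ≤ (m:ℝ) * δ := by
      have : (1:ℝ) ≤ m := by exact_mod_cast h1
      nlinarith
    have hm2 : (m:ℝ) * δ ≤ π - δ := hmδleπ m h2
    rcases le_or_gt ((m:ℝ) * δ) (π/2) with h | h
    · exact Real.strictMonoOn_sin.monotoneOn ⟨by linarith, by linarith⟩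
        ⟨by linarith, by linarith⟩ hm1
    · rw [show Real.sin ((m:ℝ)*δ) = Real.sin (π - (m:ℝ)*δ) from (Real.sin_pi_sub _).symm]
      exact Real.strictMonoOn_sin.monotoneOn ⟨by linarith, by linarith⟩
        ⟨by linarith, by linarith⟩ (by linarith)
  have sinpos : ∀ m : ℕ, 1 ≤ m → m ≤ k - 1 → 0 < Real.sin ((m:ℝ) * δ) := by
    intro m h1 h2; exact lt_of_lt_of_le hsinδ (sinb m h1 h2)
  have cosb : ∀ m : ℕ, 1 ≤ m → m ≤ k - 1 → Real.cos ((m:ℝ) * δ) ≤ Real.cos δ := by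
    intro m h1 h2
    apply Real.cos_le_cos_of_nonneg_of_le_pi hδpos.le
    · have := hmδleπ m h2; linarith
    · have : (1:ℝ) ≤ m := by exact_mod_cast h1
      nlinarith
  -- the f functional value
  have fv : ∀ ρ γ, Real.cos θ * (dpt ρ (θ + γ)).1 + Real.sin θ * (dpt ρ (θ + γ)).2
      = ρ * Real.cos γ := by
    intro ρ γ
    simp only [dpt]
    rw [Real.cos_add, Real.sin_add]
    linear_combination (ρ * Real.cos γ) * Real.sin_sq_add_cos_sq θ
  -- step: derive R cos δ ≤ R - ε from hvertex
  have hc : R * Real.cos δ ≤ R - ε := by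
    by_contra hlt
    push_neg at hlt
    apply hvertex i
    have e1 : r (i + ((1:ℕ) : ZMod (2*k))) = dpt R (θ + δ) := by
      rw [coordR 1]; norm_num
    have e2 : r (i + ((2*k-1:ℕ) : ZMod (2*k))) = dpt R (θ - δ) := by
      have h0 := coordR (2*k-1)
      have harg : θ + ((2*k-1:ℕ):ℝ) * δ = (θ - δ) + 2*π := by
        rw [Nat.cast_sub (by omega)]
        push_cast
        linear_combination h2kδ
      rw [h0, harg, dpt_per]
    have e3 : r (i + ((k:ℕ) : ZMod (2*k))) = dpt R (θ + π) := by
      have h0 := coordR k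
      rw [h0, hkδ]
    -- f values distinguish points
    have fvri : Real.cos θ * (r i).1 + Real.sin θ * (r i).2 = R := by
      rw [hriD]
      have h0 := fv R 0
      simp only [add_zero, Real.cos_zero, mul_one] at h0
      linarith [h0]
    have fvr'i : Real.cos θ * (r' i).1 + Real.sin θ * (r' i).2 = R - ε := by
      rw [hr'iD]
      have h0 := fv (R - ε) 0
      simp only [add_zero, Real.cos_zero, mul_one] at h0
      linarith [h0]
    have hne : ∀ z : ℝ × ℝ, Real.cos θ * z.1 + Real.sin θ * z.2 ≠ R →
        Real.cos θ * z.1 + Real.sin θ * z.2 ≠ R - ε → z ∈ D → z ∈ D \ {r i, r' i} := by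
      intro z h1 h2 hzD
      refine ⟨hzD, ?_⟩
      intro hz
      simp only [Set.mem_insert_iff, Set.mem_singleton_iff] at hz
      rcases hz with hz | hz
      · rw [hz] at h1; exact h1 fvri
      · rw [hz] at h2; exact h2 fvr'i
    have m1 : r (i + ((1:ℕ) : ZMod (2*k))) ∈ D \ {r i, r' i} := by
      apply hne
      · rw [e1, fv]; nlinarith
      · rw [e1, fv]; nlinarith
      · exact Or.inl ⟨_, rfl⟩
    have m2 : r (i + ((2*k-1:ℕ) : ZMod (2*k))) ∈ D \ {r i, r' i} := by
      apply hne
      · rw [e2, show θ - δ = θ + (-δ) by ring, fv, Real.cos_neg]; nlinarith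
      · rw [e2, show θ - δ = θ + (-δ) by ring, fv, Real.cos_neg]; nlinarith
      · exact Or.inl ⟨_, rfl⟩
    have m3 : r (i + ((k:ℕ) : ZMod (2*k))) ∈ D \ {r i, r' i} := by
      apply hne
      · rw [e3, fv, Real.cos_pi]; nlinarith
      · rw [e3, fv, Real.cos_pi]; nlinarith
      · exact Or.inl ⟨_, rfl⟩
    -- convex combination
    set μ : ℝ := (2*R - ε) / (R * Real.cos δ + R) with hμ
    have hden : 0 < R * Real.cos δ + R := by nlinarith
    have hμ0 : 0 ≤ μ := by apply div_nonneg _ hden.le; linarith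
    have hμ1 : μ ≤ 1 := by rw [hμ, div_le_one hden]; nlinarith
    have hcombo : (μ/2) • dpt R (θ + δ) + (μ/2) • dpt R (θ - δ) + (1 - μ) • dpt R (θ + π)
        = r' i := by
      rw [hr'iD]
      apply Prod.ext <;>
      · simp only [dpt, Prod.smul_mk, smul_eq_mul, Prod.mk_add_mk, Real.cos_add, Real.sin_add,
          Real.cos_sub, Real.sin_sub, Real.cos_add_pi, Real.sin_add_pi, hμ, Real.cos_pi, Real.sin_pi]
        field_simp
        ring
    have hsum : μ/2 + μ/2 + (1-μ) = 1 := by ring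
    have hmemb := combo3 m1 m2 m3 (by linarith) (by linarith) (by linarith) hsum
    rw [e1, e2, e3, hcombo] at hmemb
    exact hmemb
  -- pushing convex combinations into C
  have pushC : ∀ x y z : ℝ × ℝ, x ∈ C → y ∈ C → z ∈ C →
      ∀ a b c : ℝ, 0 ≤ a → 0 ≤ b → 0 ≤ c → a + b + c = 1 →
      a • x + b • y + c • z = r' i → False := by
    intro x y z hx hy hz a b c ha hb hc' habc heq
    have h1 := combo3 hx hy hz ha hb hc' habc
    rw [heq] at h1
    exact hri' (hCclosed ▸ ⟨h1, hr'iD2⟩ : r' i ∈ C)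
  have antipC : ∀ ρ : ℝ, 0 < ρ → ∀ x, x ∈ C → x = dpt ρ (θ + π) → False := by
    intro ρ hρ x hx hxe
    obtain ⟨t, ht0, ht1, hteq⟩ := antip_mem R ε ρ θ hε hεR hρ
    apply pushC (r i) x x hri hx hx t (1-t) 0 ht0 (by linarith) le_rfl (by ring)
    rw [hriD, hxe, hr'iD]
    simpa using hteq
  have noBoth : ∀ (a b : ℕ) (ρ1 ρ2 : ℝ), 1 ≤ a → a ≤ k-1 → 1 ≤ b → b ≤ k-1 →
      (ρ1 = R ∨ ρ1 = R - ε) → (ρ2 = R ∨ ρ2 = R - ε) →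
      dpt ρ1 (θ + a * δ) ∈ C → dpt ρ2 (θ - b * δ) ∈ C → False := by
    intro a b ρ1 ρ2 ha1 ha2 hb1 hb2 hρ1 hρ2 hxC hyC
    have hρ1p : 0 < ρ1 := by rcases hρ1 with h | h <;> rw [h] <;> linarith
    have hρ1R : ρ1 ≤ R := by rcases hρ1 with h | h <;> rw [h] <;> linarith
    have hρ2p : 0 < ρ2 := by rcases hρ2 with h | h <;> rw [h] <;> linarith
    have hρ2R : ρ2 ≤ R := by rcases hρ2 with h | h <;> rw [h] <;> linarith
    have hca : R * Real.cos ((a:ℝ)*δ) ≤ R - ε := by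
      have := cosb a ha1 ha2; nlinarith
    have hcb : R * Real.cos ((b:ℝ)*δ) ≤ R - ε := by
      have := cosb b hb1 hb2; nlinarith
    obtain ⟨l0, l1, l2, h0, h1, h2, hsum, heq⟩ :=
      center_mem R ε ρ1 ρ2 θ ((a:ℝ)*δ) ((b:ℝ)*δ) hε hεR hρ1p hρ1R hρ2p hρ2R
        (sinpos a ha1 ha2) (sinpos b hb1 hb2) hca hcb
    apply pushC (r i) (dpt ρ1 (θ + a * δ)) (dpt ρ2 (θ - b * δ)) hri hxC hyC l0 l1 l2 h0 h1 h2 hsum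
    rw [hriD, hr'iD]
    exact heq
  -- enumeration of D
  have enumD : ∀ x ∈ D, ∃ (ρ : ℝ) (c : ℕ), (ρ = R ∨ ρ = R - ε) ∧ c < 2*k ∧
      x = dpt ρ (θ + c * δ) := by
    intro x hx
    have hsplit : ∃ (ρ : ℝ) (l : ZMod (2*k)), (ρ = R ∨ ρ = R - ε) ∧
        x = dpt ρ (θ + ((l - i).val : ℕ) * δ) := by
      rcases hx with ⟨l, rfl⟩ | ⟨l, rfl⟩
      · refine ⟨R, l, Or.inl rfl, ?_⟩
        have hl : i + (((l - i).val : ℕ) : ZMod (2*k)) = l := by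
          rw [ZMod.natCast_rightInverse (l - i)]; ring
        conv_lhs => rw [← hl]
        rw [coordR]
      · refine ⟨R - ε, l, Or.inr rfl, ?_⟩
        have hl : i + (((l - i).val : ℕ) : ZMod (2*k)) = l := by
          rw [ZMod.natCast_rightInverse (l - i)]; ring
        conv_lhs => rw [← hl]
        rw [coordR']
    obtain ⟨ρ, l, hρ, hx'⟩ := hsplit
    exact ⟨ρ, (l - i).val, hρ, ZMod.val_lt _, hx'⟩
  -- enumeration of C
  have enumC : ∀ x ∈ C, x = r i ∨
      (∃ m : ℕ, 1 ≤ m ∧ m ≤ k-1 ∧ ∃ ρ, (ρ = R ∨ ρ = R - ε) ∧ x = dpt ρ (θ + m*δ)) ∨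
      (∃ m : ℕ, 1 ≤ m ∧ m ≤ k-1 ∧ ∃ ρ, (ρ = R ∨ ρ = R - ε) ∧ x = dpt ρ (θ - m*δ)) := by
    intro x hx
    obtain ⟨ρ, c, hρ, hc2k, hxe⟩ := enumD x (hCD hx)
    have hρp : 0 < ρ := by rcases hρ with h | h <;> rw [h] <;> linarith
    rcases Nat.lt_or_ge c 1 with hc0 | hc1
    · -- c = 0
      have hc0' : c = 0 := by omega
      subst hc0'
      have harg : θ + ((0:ℕ):ℝ) * δ = θ := by norm_num
      rw [harg] at hxe
      rcases hρ with h | h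
      · left; rw [hxe, h]; exact hriD.symm
      · exfalso
        apply hri'
        have hxr : x = r' i := by rw [hxe, h, hr'iD]
        rwa [← hxr]
    rcases Nat.lt_or_ge c k with hck | hck
    · right; left
      exact ⟨c, hc1, by omega, ρ, hρ, hxe⟩
    rcases Nat.eq_or_lt_of_le hck with hck' | hck'
    · exfalso
      apply antipC ρ hρp x hx
      rw [hxe, ← hck', hkδ]
    · right; right
      refine ⟨2*k - c, by omega, by omega, ρ, hρ, ?_⟩
      rw [hxe]
      have harg : θ + (c:ℝ) * δ = (θ - ((2*k - c : ℕ):ℝ) * δ) + 2*π := by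
        rw [Nat.cast_sub (by omega)]
        push_cast
        linear_combination h2kδ
      rw [harg, dpt_per]
  -- THE MAIN LEMMA: a maximal closed half-ring
  have MAIN : ∀ (η : ℝ) (p : ℕ → ZMod (2*k)), (η = 1 ∨ η = -1) →
      (∀ m : ℕ, 1 ≤ m → m ≤ k-1 →
        r (p m) = dpt R (θ + η * (m * δ)) ∧ r' (p m) = dpt (R-ε) (θ + η * (m * δ))) →
      (C ⊆ {r i} ∪ ⋃ m ∈ Finset.Icc 1 (k-1), ({r (p m), r' (p m)} : Set (ℝ × ℝ))) →
      C = {r i} ∪ ⋃ m ∈ Finset.Icc 1 (k-1), ({r (p m), r' (p m)} : Set (ℝ × ℝ)) := by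
    intro η p hη hcoordp hsub
    have hRε : 0 < R - ε := by linarith
    set M : ℝ := (2*R+1)/((R-ε)*Real.sin δ) with hM
    have hMeq : M * ((R-ε) * Real.sin δ) = 2*R+1 := by
      rw [hM]; field_simp
    have hMpos : 0 < M := by rw [hM]; positivity
    set ψa : ℝ := -Real.cos θ + M * (η * Real.sin θ) with hψa
    set ψb : ℝ := -Real.sin θ - M * (η * Real.cos θ) with hψb
    have ψval : ∀ ρ γ, ψa * (dpt ρ (θ + η*γ)).1 + ψb * (dpt ρ (θ + η*γ)).2
        = -(ρ * Real.cos γ) - M * (ρ * Real.sin γ) := by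
      rcases hη with hη1 | hη1 <;> subst hη1 <;> intro ρ γ
      · simp only [hψa, hψb, dpt, one_mul]
        rw [Real.cos_add, Real.sin_add]
        linear_combination (-(ρ*Real.cos γ) - M*(ρ*Real.sin γ)) * Real.sin_sq_add_cos_sq θ
      · rw [show θ + (-1)*γ = θ - γ by ring]
        simp only [hψa, hψb, dpt]
        rw [Real.cos_sub, Real.sin_sub]
        linear_combination (-(ρ*Real.cos γ) - M*(ρ*Real.sin γ)) * Real.sin_sq_add_cos_sq θ
    have gval : ∀ ρ γ, (η * (-Real.sin θ)) * (dpt ρ (θ + η*γ)).1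
        + (η * Real.cos θ) * (dpt ρ (θ + η*γ)).2 = ρ * Real.sin γ := by
      rcases hη with hη1 | hη1 <;> subst hη1 <;> intro ρ γ
      · simp only [dpt, one_mul]
        rw [Real.cos_add, Real.sin_add]
        linear_combination (ρ * Real.sin γ) * Real.sin_sq_add_cos_sq θ
      · rw [show θ + (-1)*γ = θ - γ by ring]
        simp only [dpt]
        rw [Real.cos_sub, Real.sin_sub]
        linear_combination (ρ * Real.sin γ) * Real.sin_sq_add_cos_sq θ
    set Aset : Set (ℝ × ℝ) :=
      {r i} ∪ ⋃ m ∈ Finset.Icc 1 (k-1), ({r (p m), r' (p m)} : Set (ℝ × ℝ)) with hAset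
    have hAmem : ∀ x, x ∈ Aset →
        x = r i ∨ ∃ m : ℕ, 1 ≤ m ∧ m ≤ k-1 ∧ (x = r (p m) ∨ x = r' (p m)) := by
      intro x hx
      rcases hx with hx | hx
      · left; exact hx
      · right
        simp only [Set.mem_iUnion, Finset.mem_Icc, Set.mem_insert_iff,
          Set.mem_singleton_iff] at hx
        obtain ⟨m, ⟨h1, h2⟩, h3⟩ := hx
        exact ⟨m, h1, h2, h3⟩
    have hAD : Aset ⊆ D := by
      intro x hx
      rcases hAmem x hx with hx1 | ⟨m, _, _, hx2⟩
      · rw [hx1]; exact Or.inl ⟨i, rfl⟩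
      · rcases hx2 with hx2 | hx2
        · rw [hx2]; exact Or.inl ⟨p m, rfl⟩
        · rw [hx2]; exact Or.inr ⟨p m, rfl⟩
    have hMkey : ∀ ρ : ℝ, R - ε ≤ ρ → ∀ γ : ℝ, Real.sin δ ≤ Real.sin γ →
        2*R+1 ≤ M * (ρ * Real.sin γ) := by
      intro ρ hρ γ hγ
      have step : (R-ε) * Real.sin δ ≤ ρ * Real.sin γ :=
        mul_le_mul hρ hγ hsinδ.le (by linarith)
      nlinarith [mul_le_mul_of_nonneg_left step hMpos.le]
    have ψri : ψa * (r i).1 + ψb * (r i).2 = -R := by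
      have h0 := ψval R 0
      simp only [mul_zero, add_zero, Real.cos_zero, Real.sin_zero, mul_one, sub_zero] at h0
      rw [hriD]
      exact h0
    have hψpair : ∀ ρ : ℝ, R - ε ≤ ρ → ρ ≤ R → ∀ m : ℕ, 1 ≤ m → m ≤ k-1 →
        ψa * (dpt ρ (θ + η*((m:ℝ)*δ))).1 + ψb * (dpt ρ (θ + η*((m:ℝ)*δ))).2 ≤ -R - 1 := by
      intro ρ hρ1 hρ2 m h1 h2
      rw [ψval]
      have key := hMkey ρ hρ1 ((m:ℝ)*δ) (sinb m h1 h2)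
      nlinarith [mul_le_mul_of_nonneg_left (Real.neg_one_le_cos ((m:ℝ)*δ))
        (show (0:ℝ) ≤ ρ by linarith)]
    have hψA : ∀ x ∈ Aset, ψa * x.1 + ψb * x.2 ≤ -R := by
      intro x hx
      rcases hAmem x hx with hx1 | ⟨m, h1, h2, hx2⟩
      · rw [hx1, ψri]
      · rcases hx2 with hx2 | hx2
        · rw [hx2, (hcoordp m h1 h2).1]
          have := hψpair R (by linarith) le_rfl m h1 h2; linarith
        · rw [hx2, (hcoordp m h1 h2).2]
          have := hψpair (R-ε) le_rfl (by linarith) m h1 h2; linarith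
    have hgA : ∀ x ∈ Aset, 0 ≤ (η*(-Real.sin θ)) * x.1 + (η*Real.cos θ) * x.2 := by
      intro x hx
      rcases hAmem x hx with hx1 | ⟨m, h1, h2, hx2⟩
      · rw [hx1, hriD]
        have h0 := gval R 0
        simp only [mul_zero, add_zero, Real.sin_zero] at h0
        rw [h0]
      · rcases hx2 with hx2 | hx2
        · rw [hx2, (hcoordp m h1 h2).1, gval]
          exact mul_nonneg (by linarith) (sinpos m h1 h2).le
        · rw [hx2, (hcoordp m h1 h2).2, gval]
          exact mul_nonneg (by linarith) (sinpos m h1 h2).le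
    have hclosedA : convexHull ℝ Aset ∩ D = Aset := by
      apply Set.Subset.antisymm
      · rintro x ⟨hxh, hxD⟩
        obtain ⟨ρ, c, hρ, hc2k, hxe⟩ := enumD x hxD
        have hρ1 : R - ε ≤ ρ := by rcases hρ with h | h <;> rw [h] <;> linarith
        have hρ2 : ρ ≤ R := by rcases hρ with h | h <;> rw [h] <;> linarith
        have hρp : 0 < ρ := by linarith
        have hflip : ∃ m : ℕ, m < 2*k ∧ x = dpt ρ (θ + η * ((m:ℝ)*δ)) := by
          rcases hη with hη1 | hη1 <;> subst hη1
          · exact ⟨c, hc2k, by rw [hxe]; congr 1; ring⟩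
          · rcases Nat.eq_zero_or_pos c with hc0 | hc0
            · subst hc0
              refine ⟨0, by omega, ?_⟩
              rw [hxe]; congr 1; push_cast; ring
            · refine ⟨2*k - c, by omega, ?_⟩
              rw [hxe]
              have harg : θ + (c:ℝ)*δ = (θ + (-1) * (((2*k-c:ℕ):ℝ)*δ)) + 2*π := by
                rw [Nat.cast_sub (by omega)]
                push_cast
                linear_combination h2kδ
              rw [harg, dpt_per]
        obtain ⟨m, hm2k, hxm⟩ := hflip
        rcases Nat.eq_zero_or_pos m with hm0 | hm1
        · subst hm0
          rcases hρ with h | h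
          · subst h
            left
            rw [hxm, hriD]
            congr 1
            push_cast; ring
          · exfalso
            subst h
            have hstrict : ∀ y ∈ Aset, ψa*y.1+ψb*y.2 < -(R-ε) :=
              fun y hy => lt_of_le_of_lt (hψA y hy) (by linarith)
            have hxv := hull_lt hstrict hxh
            rw [hxm] at hxv
            have h0 := ψval (R-ε) (((0:ℕ):ℝ)*δ)
            simp only [Nat.cast_zero, zero_mul, mul_zero, add_zero, Real.cos_zero,
              Real.sin_zero, mul_one, sub_zero] at h0 hxv
            linarith [h0, hxv]
        · by_cases hmk1 : m ≤ k-1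
          · right
            simp only [Set.mem_iUnion, Finset.mem_Icc, Set.mem_insert_iff,
              Set.mem_singleton_iff]
            refine ⟨m, ⟨hm1, hmk1⟩, ?_⟩
            rcases hρ with h | h
            · left; rw [hxm, h, (hcoordp m hm1 hmk1).1]
            · right; rw [hxm, h, (hcoordp m hm1 hmk1).2]
          · by_cases hmk : m = k
            · exfalso
              have hstrict : ∀ y ∈ Aset, ψa*y.1+ψb*y.2 < 0 :=
                fun y hy => lt_of_le_of_lt (hψA y hy) (by linarith)
              have hxv := hull_lt hstrict hxh
              rw [hxm, hmk, ψval, hkδ, Real.cos_pi, Real.sin_pi] at hxv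
              nlinarith [hxv]
            · exfalso
              have hxv := hull_ge hgA hxh
              rw [hxm, gval] at hxv
              have hsm : Real.sin ((m:ℝ)*δ) < 0 := by
                have hmlow : ((k:ℝ)+1) ≤ m := by exact_mod_cast (by omega : k+1 ≤ m)
                have hmhigh : (m:ℝ) ≤ 2*(k:ℝ) - 1 := by
                  have : (m:ℝ) ≤ ((2*k - 1 : ℕ):ℝ) := by exact_mod_cast (by omega : m ≤ 2*k-1)
                  rwa [Nat.cast_sub (by omega), Nat.cast_mul, Nat.cast_two, Nat.cast_one] at this
                have hb1 : π < (m:ℝ)*δ := by nlinarith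
                have hb2 : (m:ℝ)*δ < 2*π := by nlinarith
                have hpos : 0 < Real.sin (2*π - (m:ℝ)*δ) :=
                  Real.sin_pos_of_pos_of_lt_pi (by linarith) (by nlinarith)
                have : Real.sin (2*π - (m:ℝ)*δ) = -Real.sin ((m:ℝ)*δ) := by
                  rw [show 2*π - (m:ℝ)*δ = -((m:ℝ)*δ - 2*π) by ring, Real.sin_neg,
                    Real.sin_sub_two_pi]
                linarith [this ▸ hpos]
              nlinarith [hxv, hsm, hρp]
      · intro x hx
        exact ⟨subset_convexHull ℝ _ hx, hAD hx⟩
    have hr'A : r' i ∉ Aset := by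
      intro hm
      have hv := hψA _ hm
      rw [hr'iD] at hv
      have h0 := ψval (R-ε) (((0:ℕ):ℝ)*δ)
      simp only [Nat.cast_zero, zero_mul, mul_zero, add_zero, Real.cos_zero,
        Real.sin_zero, mul_one, sub_zero] at h0
      rw [h0] at hv
      linarith
    have hriA : r i ∈ Aset := Or.inl rfl
    exact (hmax Aset hsub hAD hclosedA hriA hr'A).symm
  -- coordinates on the two sides
  have hcoordM : ∀ m : ℕ, 1 ≤ m → m ≤ k-1 →
      r (i - (m : ZMod (2*k))) = dpt R (θ + (-1) * ((m:ℝ) * δ)) ∧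
      r' (i - (m : ZMod (2*k))) = dpt (R-ε) (θ + (-1) * ((m:ℝ) * δ)) := by
    intro m h1 h2
    have hidx : i - ((m:ℕ) : ZMod (2*k)) = i + (((2*k - m : ℕ)) : ZMod (2*k)) := by
      rw [Nat.cast_sub (by omega), ZMod.natCast_self]
      ring
    have harg : θ + ((2*k - m : ℕ):ℝ) * δ = (θ + (-1) * ((m:ℝ) * δ)) + 2*π := by
      rw [Nat.cast_sub (by omega)]
      push_cast
      linear_combination h2kδ
    exact ⟨by rw [hidx, coordR, harg, dpt_per], by rw [hidx, coordR', harg, dpt_per]⟩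
  have hcoordP : ∀ m : ℕ, 1 ≤ m → m ≤ k-1 →
      r (i + (m : ZMod (2*k))) = dpt R (θ + 1 * ((m:ℝ) * δ)) ∧
      r' (i + (m : ZMod (2*k))) = dpt (R-ε) (θ + 1 * ((m:ℝ) * δ)) := by
    intro m _ _
    constructor
    · rw [coordR]; congr 1; ring
    · rw [coordR']; congr 1; ring
  -- final case analysis
  by_cases hMinus : ∃ m : ℕ, 1 ≤ m ∧ m ≤ k-1 ∧ ∃ ρ : ℝ, (ρ = R ∨ ρ = R - ε) ∧
      dpt ρ (θ - m*δ) ∈ C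
  · right
    obtain ⟨b, hb1, hb2, ρ2, hρ2, hbC⟩ := hMinus
    apply MAIN (-1) (fun m => i - (m : ZMod (2*k))) (Or.inr rfl) hcoordM
    intro x hx
    rcases enumC x hx with hxe | ⟨m, h1, h2, ρ, hρ, hxe⟩ | ⟨m, h1, h2, ρ, hρ, hxe⟩
    · exact Or.inl hxe
    · exact (noBoth m b ρ ρ2 h1 h2 hb1 hb2 hρ hρ2 (hxe ▸ hx) hbC).elim
    · refine Or.inr ?_
      simp only [Set.mem_iUnion, Finset.mem_Icc, Set.mem_insert_iff, Set.mem_singleton_iff]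
      refine ⟨m, ⟨h1, h2⟩, ?_⟩
      rcases hρ with h | h
      · left; rw [hxe, h, (hcoordM m h1 h2).1]; congr 1; ring
      · right; rw [hxe, h, (hcoordM m h1 h2).2]; congr 1; ring
  · left
    apply MAIN 1 (fun m => i + (m : ZMod (2*k))) (Or.inl rfl) hcoordP
    intro x hx
    rcases enumC x hx with hxe | ⟨m, h1, h2, ρ, hρ, hxe⟩ | ⟨m, h1, h2, ρ, hρ, hxe⟩
    · exact Or.inl hxe
    · refine Or.inr ?_
      simp only [Set.mem_iUnion, Finset.mem_Icc, Set.mem_insert_iff, Set.mem_singleton_iff]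
      refine ⟨m, ⟨h1, h2⟩, ?_⟩
      rcases hρ with h | h
      · left; rw [hxe, h, (hcoordP m h1 h2).1]; congr 1; ring
      · right; rw [hxe, h, (hcoordP m h1 h2).2]; congr 1; ring
    · exact (hMinus ⟨m, h1, h2, ρ, hρ, hxe ▸ hx⟩).elim
end
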